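/- Let L, compactness, the condition (FG), the submodular function δ, and the descending chain condition (DCC) be as in the context. Then for every b ∈ L and every family (a_i)_{i∈I} of elements of L with a_i ≤ b and a_i strong in b for all i ∈ I, the infimum ⨅_{i∈I} a_i is strong in b. In particular, for any x ≤ b the self-sufficient closure ⌈x⌉_b := ⨅{a ∈ L : x ≤ a ≤ b and a is strong in b} is strong in b. -/

import Mathlib

open CompleteLattice

/-- `a` is strong (self-sufficient) in `b`: for every compact `x ≤ b` and compact
`y ≤ a` there is a compact `y'` with `y ≤ y' ≤ a` and `δ(x ⊔ y') ≥ δ(y')`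
(i.e. the relative predimension `δ(x / a)` is non-negative). -/
def IsStrong {L : Type*} [CompleteLattice L] (δ : L → ℤ) (a b : L) : Prop :=
  ∀ x, IsCompactElement x → x ≤ b → ∀ y, IsCompactElement y → y ≤ a →
    ∃ y', IsCompactElement y' ∧ y ≤ y' ∧ y' ≤ a ∧ δ y' ≤ δ (x ⊔ y')

section Aux

variable {L : Type*} [CompleteLattice L]

/-- Build an infinite sequence from a step function. -/
lemma IsStrongAux.chainSeq {α : Type*} (P : α → Prop) (r : α → α → Prop)
    (h₀ : ∃ a, P a) (step : ∀ a, P a → ∃ b, P b ∧ r b a) :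
    ∃ f : ℕ → α, (∀ n, P (f n)) ∧ ∀ n, r (f (n + 1)) (f n) := by
  choose g hg1 hg2 using step
  obtain ⟨a₀, ha₀⟩ := h₀
  let F : ℕ → {a // P a} := fun n =>
    Nat.rec ⟨a₀, ha₀⟩ (fun _ p => ⟨g p.1 p.2, hg1 p.1 p.2⟩) n
  refine ⟨fun n => (F n).1, fun n => (F n).2, fun n => ?_⟩
  exact hg2 (F n).1 (F n).2

/-- The join of two compact elements is compact. -/
lemma IsStrongAux.sup_compact {x y : L} (hx : IsCompactElement x) (hy : IsCompactElement y) :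
    IsCompactElement (x ⊔ y) := by
  classical
  rw [isCompactElement_iff_exists_le_sSup_of_le_sSup] at hx hy ⊢
  intro s hs
  obtain ⟨t₁, ht₁s, ht₁⟩ := hx s (le_sup_left.trans hs |>.trans le_rfl)
  obtain ⟨t₂, ht₂s, ht₂⟩ := hy s (le_sup_right.trans hs |>.trans le_rfl)
  refine ⟨t₁ ∪ t₂, ?_, ?_⟩
  · intro z hz
    rcases Finset.mem_union.mp hz with h | h
    · exact ht₁s h
    · exact ht₂s h
  · rw [Finset.sup_union]
    exact sup_le (ht₁.trans le_sup_left) (ht₂.trans le_sup_right)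

/-- No strictly ascending sequence below a compact element. -/
lemma IsStrongAux.no_ascending
    (hFG : ∀ x c : L, IsCompactElement c → x ≤ c → IsCompactElement x)
    {c : L} (hc : IsCompactElement c) :
    ¬ ∃ f : ℕ → L, (∀ n, f n ≤ c) ∧ ∀ n, f n < f (n + 1) := by
  classical
  rintro ⟨f, hle, hlt⟩
  have hmono : ∀ m n, m ≤ n → f m ≤ f n := by
    intro m n h
    induction h with
    | refl => exact le_rfl
    | step _ ih => exact ih.trans (hlt _).le
  set s := ⨆ n, f n with hsdef
  have hs : s ≤ c := iSup_le hle
  have hsc : IsCompactElement s := hFG s c hc hs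
  rw [isCompactElement_iff_exists_le_sSup_of_le_sSup] at hsc
  obtain ⟨F, hFsub, hFle⟩ := hsc (Set.range f) (by rw [sSup_range])
  have hN : ∀ (F : Finset L), ↑F ⊆ Set.range f → ∃ N, F.sup id ≤ f N := by
    intro F
    induction F using Finset.induction_on with
    | empty => intro _; exact ⟨0, by simp⟩
    | @insert a F _ ih =>
      intro hsubset
      obtain ⟨i, hi⟩ := hsubset (Finset.mem_insert_self a F)
      obtain ⟨N, hNle⟩ := ih (fun z hz => hsubset (Finset.mem_insert_of_mem hz))
      refine ⟨max i N, ?_⟩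
      rw [Finset.sup_insert]
      exact sup_le (by rw [← hi]; exact hmono i _ (le_max_left i N))
        (hNle.trans (hmono N _ (le_max_right i N)))
  obtain ⟨N, hNle⟩ := hN F hFsub
  have h1 : f (N + 1) ≤ f N := (le_iSup f (N + 1)).trans (hFle.trans hNle)
  exact (hlt N).not_ge h1

/-- Every nonempty subset below a compact element has a maximal element. -/
lemma IsStrongAux.exists_maximal
    (hFG : ∀ x c : L, IsCompactElement c → x ≤ c → IsCompactElement x)
    {c : L} (hc : IsCompactElement c) {S : Set L}
    (hS : S.Nonempty) (hSc : ∀ t ∈ S, t ≤ c) : ∃ m ∈ S, ∀ t ∈ S, ¬ m < t := by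
  by_contra h
  push_neg at h
  obtain ⟨f, hP, hr⟩ := IsStrongAux.chainSeq (· ∈ S) (fun b a => a < b) hS
    (fun a haS => by
      obtain ⟨t, htS, hlt⟩ := h a haS
      exact ⟨t, htS, hlt⟩)
  exact IsStrongAux.no_ascending hFG hc ⟨f, fun n => hSc _ (hP n), hr⟩

/-- From DCC: there is no predicate `Q` with a strictly descending strong step. -/
lemma IsStrongAux.descending_absurd (δ : L → ℤ)
    (hDCC : ¬ ∃ c : ℕ → L, (∀ n, IsCompactElement (c n)) ∧ (∀ n, c (n + 1) < c n) ∧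
      ∀ n, IsStrong δ (c (n + 1)) (c n))
    (Q : L → Prop) (c₀ : L) (h₀ : Q c₀)
    (hcomp : ∀ c, Q c → IsCompactElement c)
    (step : ∀ c, Q c → ∃ c', Q c' ∧ c' < c ∧ IsStrong δ c' c) : False := by
  obtain ⟨f, hP, hr⟩ := IsStrongAux.chainSeq Q (fun b a => b < a ∧ IsStrong δ b a)
    ⟨c₀, h₀⟩ (fun a haQ => by
      obtain ⟨c', hc', hlt, hstr⟩ := step a haQ
      exact ⟨c', hc', hlt, hstr⟩)
  exact hDCC ⟨f, fun n => hcomp _ (hP n), fun n => (hr n).1, fun n => (hr n).2⟩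

/-- `δ` is bounded below on the interval below a compact element. -/
lemma IsStrongAux.bddBelow (δ : L → ℤ)
    (hFG : ∀ x c : L, IsCompactElement c → x ≤ c → IsCompactElement x)
    (hsub : ∀ x y : L, IsCompactElement x → IsCompactElement y →
      δ (x ⊔ y) + δ (x ⊓ y) ≤ δ x + δ y)
    (hDCC : ¬ ∃ c : ℕ → L, (∀ n, IsCompactElement (c n)) ∧ (∀ n, c (n + 1) < c n) ∧
      ∀ n, IsStrong δ (c (n + 1)) (c n))
    {e : L} (he : IsCompactElement e) :
    ∃ N : ℤ, ∀ t, t ≤ e → N ≤ δ t := by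
  by_contra h
  push_neg at h
  set Q : L → Prop := fun c => c ≤ e ∧ ∀ N : ℤ, ∃ t, t ≤ c ∧ δ t < N with hQdef
  refine IsStrongAux.descending_absurd δ hDCC Q e
    ⟨le_rfl, fun N => by
      obtain ⟨t, hte, htδ⟩ := h N
      exact ⟨t, hte, htδ⟩⟩
    (fun c hc => hFG c e he hc.1) ?_
  intro c hc
  obtain ⟨hce, hub⟩ := hc
  have hcc : IsCompactElement c := hFG c e he hce
  set U : Set L := {u | u ≤ c ∧ ∀ N : ℤ, ∃ t, u ≤ t ∧ t ≤ c ∧ δ t < N} with hUdef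
  have hUne : U.Nonempty := ⟨⊥, bot_le, fun N => by
    obtain ⟨t, htc, htδ⟩ := hub N
    exact ⟨t, bot_le, htc, htδ⟩⟩
  obtain ⟨u, huU, humax⟩ := IsStrongAux.exists_maximal hFG hcc hUne (fun t ht => ht.1)
  obtain ⟨t₀, hut₀, ht₀c, ht₀δ⟩ := huU.2 (min (δ u) (δ c))
  have ht₀δu : δ t₀ < δ u := lt_of_lt_of_le ht₀δ (min_le_left _ _)
  have ht₀δc : δ t₀ < δ c := lt_of_lt_of_le ht₀δ (min_le_right _ _)
  have ht₀u : u < t₀ := lt_of_le_of_ne hut₀ (fun hequ => by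
    rw [hequ] at ht₀δu; exact absurd ht₀δu (lt_irrefl _))
  have ht₀U : t₀ ∉ U := fun hmem => humax t₀ hmem ht₀u
  have hbdd : ∃ N₀ : ℤ, ∀ t, t₀ ≤ t → t ≤ c → N₀ ≤ δ t := by
    by_contra h'
    push_neg at h'
    exact ht₀U ⟨ht₀c, fun N => by
      obtain ⟨t, h1, h2, h3⟩ := h' N
      exact ⟨t, h1, h2, h3⟩⟩
  obtain ⟨N₀, hN₀⟩ := hbdd
  classical
  obtain ⟨m, ⟨s, hts, hsc, hδs⟩, hmin⟩ :=
    Int.exists_least_of_bdd (P := fun n => ∃ t, t₀ ≤ t ∧ t ≤ c ∧ δ t = n)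
      ⟨N₀, fun z hz => by
        obtain ⟨t, h1, h2, h3⟩ := hz
        rw [← h3]; exact hN₀ t h1 h2⟩
      ⟨δ t₀, t₀, le_rfl, ht₀c, rfl⟩
  have hsolid : ∀ r, s ≤ r → r ≤ c → δ s ≤ δ r := by
    intro r h1 h2
    rw [hδs]
    exact hmin (δ r) ⟨r, hts.trans h1, h2, rfl⟩
  have hscomp : IsCompactElement s := hFG s c hcc hsc
  refine ⟨s, ⟨hsc.trans hce, ?_⟩, ?_, ?_⟩
  · intro N
    obtain ⟨t, htc, htδ⟩ := hub N
    refine ⟨t ⊓ s, inf_le_right, ?_⟩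
    have htcomp : IsCompactElement t := hFG t c hcc htc
    have h1 := hsub t s htcomp hscomp
    have h2 : δ s ≤ δ (t ⊔ s) := hsolid _ le_sup_right (sup_le htc hsc)
    linarith
  · refine lt_of_le_of_ne hsc (fun heq => ?_)
    have h1 : δ s ≤ δ t₀ := by
      rw [hδs]; exact hmin (δ t₀) ⟨t₀, le_rfl, ht₀c, rfl⟩
    rw [heq] at h1
    exact absurd (h1.trans_lt ht₀δc) (lt_irrefl _)
  · intro x hxcomp hxc y _ hys
    exact ⟨s, hscomp, hys, le_rfl, hsolid (x ⊔ s) le_sup_right (sup_le hxc hsc)⟩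

/-- Main lemma: the infimum of a family of strong subelements of `b` is strong in `b`. -/
lemma IsStrongAux.main (δ : L → ℤ)
    (hFG : ∀ x c : L, IsCompactElement c → x ≤ c → IsCompactElement x)
    (hsub : ∀ x y : L, IsCompactElement x → IsCompactElement y →
      δ (x ⊔ y) + δ (x ⊓ y) ≤ δ x + δ y)
    (hDCC : ¬ ∃ c : ℕ → L, (∀ n, IsCompactElement (c n)) ∧ (∀ n, c (n + 1) < c n) ∧
      ∀ n, IsStrong δ (c (n + 1)) (c n))
    (b : L) {ι : Type*} (a : ι → L) (ha : ∀ i, a i ≤ b)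
    (hstr : ∀ i, IsStrong δ (a i) b) : IsStrong δ (⨅ i, a i) b := by
  intro x hx hxb y hy hya
  set e := x ⊔ y with hedef
  have he : IsCompactElement e := IsStrongAux.sup_compact hx hy
  obtain ⟨N, hN⟩ := IsStrongAux.bddBelow δ hFG hsub hDCC he
  classical
  obtain ⟨m, ⟨v₀, hv₀y, hv₀e, hv₀δ⟩, hmin⟩ :=
    Int.exists_least_of_bdd (P := fun n => ∃ v, y ≤ v ∧ v ≤ e ∧ δ v = n)
      ⟨N, fun z hz => by
        obtain ⟨v, _, h2, h3⟩ := hz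
        rw [← h3]; exact hN v h2⟩
      ⟨δ e, e, le_sup_right, le_rfl, rfl⟩
  have hMlb : ∀ r, y ≤ r → r ≤ e → m ≤ δ r := fun r h1 h2 => hmin (δ r) ⟨r, h1, h2, rfl⟩
  set M : Set L := {v | y ≤ v ∧ v ≤ e ∧ δ v = m} with hMdef
  -- every element of M is strong in anything between it and e
  have hMstrong : ∀ v ∈ M, ∀ c, v ≤ c → c ≤ e → IsStrong δ v c := by
    rintro v ⟨hyv, hve, hδv⟩ c hvc hce x₀ _ hx₀c y₀ _ hy₀v
    refine ⟨v, hFG v e he hve, hy₀v, le_rfl, ?_⟩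
    rw [hδv]
    exact hMlb (x₀ ⊔ v) (hyv.trans le_sup_right) (sup_le (hx₀c.trans hce) hve)
  -- M has a minimal element
  have hminM : ∃ v ∈ M, ∀ w ∈ M, ¬ w < v := by
    by_contra hno
    push_neg at hno
    refine IsStrongAux.descending_absurd δ hDCC (· ∈ M) v₀ ⟨hv₀y, hv₀e, hv₀δ⟩
      (fun c hc => hFG c e he hc.2.1) ?_
    intro c hc
    obtain ⟨w, hwM, hwlt⟩ := hno c hc
    exact ⟨w, hwM, hwlt, hMstrong w hwM c hwlt.le hc.2.1⟩
  obtain ⟨v, hvM, hvmin⟩ := hminM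
  obtain ⟨hyv, hve, hδv⟩ := hvM
  have hvcomp : IsCompactElement v := hFG v e he hve
  have hva : ∀ i, v ≤ a i := by
    intro i
    have hyai : y ≤ a i := hya.trans (iInf_le a i)
    have hvb : v ≤ b := hve.trans (sup_le hxb (hyai.trans (ha i)))
    obtain ⟨u, hucomp, hyu, hua, hδu⟩ := hstr i v hvcomp hvb y hy hyai
    have hsub' := hsub v u hvcomp hucomp
    have h1 : δ (v ⊓ u) ≤ δ v := by linarith
    have h2 : m ≤ δ (v ⊓ u) := hMlb _ (le_inf hyv hyu) (inf_le_left.trans hve)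
    have h3 : δ (v ⊓ u) = m := le_antisymm (by rw [← hδv]; exact h1) h2
    have hwM : v ⊓ u ∈ M := ⟨le_inf hyv hyu, inf_le_left.trans hve, h3⟩
    have hne : v ⊓ u = v := by
      by_contra hne
      exact hvmin _ hwM (lt_of_le_of_ne inf_le_left hne)
    calc v = v ⊓ u := hne.symm
      _ ≤ u := inf_le_right
      _ ≤ a i := hua
  refine ⟨v, hvcomp, hyv, le_iInf hva, ?_⟩
  rw [hδv]
  exact hMlb (x ⊔ v) (hyv.trans le_sup_right) (sup_le le_sup_left hve)

end Aux

/-- An arbitrary infimum of strong subelements of `b` is strong in `b`; in particular,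
the self-sufficient closure `⌈x⌉_b` of any `x ≤ b` is strong in `b`. -/
theorem iInf_isStrong {L : Type*} [CompleteLattice L] (δ : L → ℤ)
    (hFG : ∀ x c : L, IsCompactElement c → x ≤ c → IsCompactElement x)
    (hbot : δ ⊥ = 0)
    (hsub : ∀ x y : L, IsCompactElement x → IsCompactElement y →
      δ (x ⊔ y) + δ (x ⊓ y) ≤ δ x + δ y)
    (hDCC : ¬ ∃ c : ℕ → L, (∀ n, IsCompactElement (c n)) ∧ (∀ n, c (n + 1) < c n) ∧
      ∀ n, IsStrong δ (c (n + 1)) (c n))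
    (b : L) {ι : Type*} (a : ι → L) (ha : ∀ i, a i ≤ b) (hstr : ∀ i, IsStrong δ (a i) b) :
    IsStrong δ (⨅ i, a i) b ∧
    ∀ x : L, x ≤ b → IsStrong δ (sInf {a' : L | x ≤ a' ∧ a' ≤ b ∧ IsStrong δ a' b}) b := by
  constructor
  · exact IsStrongAux.main δ hFG hsub hDCC b a ha hstr
  · intro x _
    rw [sInf_eq_iInf']
    exact IsStrongAux.main δ hFG hsub hDCC b
      (fun p : {a' : L | x ≤ a' ∧ a' ≤ b ∧ IsStrong δ a' b} => (p : L))
      (fun p => p.2.2.1) (fun p => p.2.2.2)
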